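/- arXiv:2605.02611 — 4 statements merged into one kernel-verified Lean document; each statement's English description precedes it below -/
import Mathlib

section
/- Every logit maximizer of any Lipschitz-consistent head at pool point u lies in the certified feasible label set Γ(u) := {c : UB_c(u) ≥ 0}. In particular, if Γ(u) is a singleton {c⋆}, then every head in F(S) predicts c⋆ at u. -/
open Finset

/-- One-vs-rest margin `M_c(z) = f_c(z) - max_{k ≠ c} f_k(z)` of a logit vector. -/
noncomputable def margin {C : ℕ} (hC : 2 ≤ C) (f : Fin C → ℝ) (c : Fin C) : ℝ :=
  f c - (Finset.univ.erase c).sup'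
    (by
      rw [← Finset.card_pos, Finset.card_erase_of_mem (Finset.mem_univ c),
        Finset.card_univ, Fintype.card_fin]
      omega) f

/-- Upper envelope `UB_c(u)` in `EReal` (so `inf ∅ = +∞`). -/
noncomputable def UB {m C : ℕ} {ι : Type*} (S : Finset ι)
    (z : ι → EuclideanSpace ℝ (Fin m)) (y : ι → Fin C) (mlb : ι → ℝ)
    (L : Fin C → ℝ) (zu : EuclideanSpace ℝ (Fin m)) (c : Fin C) : EReal :=
  (S.filter fun i => y i ≠ c).inf fun i => ((-mlb i + L c * ‖zu - z i‖ : ℝ) : EReal)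

/-- Every logit maximizer of a Lipschitz-consistent head at `zu` lies in the
certified feasible set `Γ(u) = {c : UB_c(u) ≥ 0}`; in particular, if
`Γ(u) = {c⋆}` then every consistent head predicts `c⋆` at `zu`. -/
theorem predicted_label_in_feasible_set
    {m C : ℕ} (hC : 2 ≤ C) {ι : Type*} [Fintype ι]
    (S : Finset ι)
    (z : ι → EuclideanSpace ℝ (Fin m))
    (y : ι → Fin C)
    (mlb : ι → ℝ) (hmlb : ∀ i, 0 ≤ mlb i)
    (L : Fin C → ℝ)
    (f : EuclideanSpace ℝ (Fin m) → Fin C → ℝ)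
    (hLip : ∀ c z₁ z₂, |margin hC (f z₁) c - margin hC (f z₂) c| ≤ L c * ‖z₁ - z₂‖)
    (hCenter : ∀ i ∈ S, mlb i ≤ margin hC (f (z i)) (y i))
    (zu : EuclideanSpace ℝ (Fin m)) :
    (∀ c, (∀ k, f zu k ≤ f zu c) → 0 ≤ UB S z y mlb L zu c) ∧
    (∀ cstar : Fin C,
      ({c | 0 ≤ UB S z y mlb L zu c} = {cstar}) →
      ∀ c, (∀ k, f zu k ≤ f zu c) → c = cstar) := by
  have main : ∀ c, (∀ k, f zu k ≤ f zu c) → 0 ≤ UB S z y mlb L zu c := by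
    intro c hmax
    unfold UB
    rw [Finset.le_inf_iff]
    intro i hi
    rw [Finset.mem_filter] at hi
    obtain ⟨hiS, hne⟩ := hi
    -- margin of c at zu is nonnegative
    have h1 : 0 ≤ margin hC (f zu) c := by
      unfold margin
      have : (Finset.univ.erase c).sup' (by
          rw [← Finset.card_pos, Finset.card_erase_of_mem (Finset.mem_univ c),
            Finset.card_univ, Fintype.card_fin]
          omega) (f zu) ≤ f zu c :=
        Finset.sup'_le _ _ fun k _ => hmax k
      linarith
    -- margin of c at z i is ≤ -mlb i
    have h2 : margin hC (f (z i)) c ≤ -mlb i := by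
      have hy := hCenter i hiS
      unfold margin at hy ⊢
      have hmem1 : y i ∈ Finset.univ.erase c := Finset.mem_erase.2 ⟨hne, Finset.mem_univ _⟩
      have hmem2 : c ∈ Finset.univ.erase (y i) :=
        Finset.mem_erase.2 ⟨fun h => hne h.symm, Finset.mem_univ _⟩
      have hb1 : f (z i) (y i) ≤ (Finset.univ.erase c).sup' (by
          rw [← Finset.card_pos, Finset.card_erase_of_mem (Finset.mem_univ c),
            Finset.card_univ, Fintype.card_fin]
          omega) (f (z i)) := Finset.le_sup' _ hmem1
      have hb2 : f (z i) c ≤ (Finset.univ.erase (y i)).sup' (by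
          rw [← Finset.card_pos, Finset.card_erase_of_mem (Finset.mem_univ (y i)),
            Finset.card_univ, Fintype.card_fin]
          omega) (f (z i)) := Finset.le_sup' _ hmem2
      linarith
    have h3 := hLip c zu (z i)
    have h4 : margin hC (f zu) c - margin hC (f (z i)) c ≤ L c * ‖zu - z i‖ :=
      le_trans (le_abs_self _) h3
    have : (0 : ℝ) ≤ -mlb i + L c * ‖zu - z i‖ := by linarith
    exact_mod_cast EReal.coe_le_coe_iff.2 this
  refine ⟨main, fun cstar hset c hmax => ?_⟩
  have : c ∈ ({c | 0 ≤ UB S z y mlb L zu c} : Set (Fin C)) := main c hmax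
  rw [hset] at this
  exact this
end

section
/- Soundness of gap forcing: fix τ ≥ 0 and κ ≥ 0. If at pool point u there exists a class c⋆ with LB_{c⋆}(u) ≥ κ and LB_{c⋆}(u) > max_{c ≠ c⋆} UB_c(u) + τ, then c⋆ is the unique logit maximizer at z_u for every head f̃ ∈ F(S). -/
open Finset

/-- Lower envelope `LB_c(u)` in `EReal` (so `sup ∅ = -∞`). -/
noncomputable def LB {m C : ℕ} {ι : Type*} (S : Finset ι)
    (z : ι → EuclideanSpace ℝ (Fin m)) (y : ι → Fin C) (mlb : ι → ℝ)
    (L : Fin C → ℝ) (zu : EuclideanSpace ℝ (Fin m)) (c : Fin C) : EReal :=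
  (S.filter fun i => y i = c).sup fun i => ((mlb i - L c * ‖zu - z i‖ : ℝ) : EReal)

private lemma erase_nonempty' {C : ℕ} (hC : 2 ≤ C) (c : Fin C) :
    (Finset.univ.erase c).Nonempty := by
  rw [← Finset.card_pos, Finset.card_erase_of_mem (Finset.mem_univ c),
    Finset.card_univ, Fintype.card_fin]
  omega

/-- Margin of a wrong class at a certified center is at most `-mlb`. -/
private lemma margin_wrong_le {C : ℕ} (hC : 2 ≤ C) (g : Fin C → ℝ) (c k : Fin C)
    (hk : k ≠ c) (mb : ℝ) (hcen : mb ≤ margin hC g c) :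
    margin hC g k ≤ -mb := by
  have hkmem : k ∈ Finset.univ.erase c := Finset.mem_erase.mpr ⟨hk, Finset.mem_univ k⟩
  have hcmem : c ∈ Finset.univ.erase k := Finset.mem_erase.mpr ⟨(Ne.symm hk), Finset.mem_univ c⟩
  have h1 : g k ≤ (Finset.univ.erase c).sup' (erase_nonempty' hC c) g :=
    Finset.le_sup' g hkmem
  have h2 : g c ≤ (Finset.univ.erase k).sup' (erase_nonempty' hC k) g :=
    Finset.le_sup' g hcmem
  unfold margin at hcen ⊢
  linarith

/-- Soundness of gap forcing: if `LB_{c⋆}(u) ≥ κ` and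
`LB_{c⋆}(u) > max_{c ≠ c⋆} UB_c(u) + τ`, then `c⋆` is the unique logit maximizer
at `zu` for every Lipschitz-consistent head. -/
theorem gap_forcing_sound
    {m C : ℕ} (hC : 2 ≤ C) {ι : Type*} [Fintype ι]
    (S : Finset ι)
    (z : ι → EuclideanSpace ℝ (Fin m))
    (y : ι → Fin C)
    (mlb : ι → ℝ) (hmlb : ∀ i, 0 ≤ mlb i)
    (L : Fin C → ℝ)
    (f : EuclideanSpace ℝ (Fin m) → Fin C → ℝ)
    (hLip : ∀ c z₁ z₂, |margin hC (f z₁) c - margin hC (f z₂) c| ≤ L c * ‖z₁ - z₂‖)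
    (hCenter : ∀ i ∈ S, mlb i ≤ margin hC (f (z i)) (y i))
    (zu : EuclideanSpace ℝ (Fin m))
    (τ κ : ℝ) (hτ : 0 ≤ τ) (hκ : 0 ≤ κ)
    (cstar : Fin C)
    (hLB : (κ : EReal) ≤ LB S z y mlb L zu cstar)
    (hGap : ((Finset.univ.erase cstar).sup fun c => UB S z y mlb L zu c) + (τ : EReal)
        < LB S z y mlb L zu cstar) :
    ∀ k ≠ cstar, f zu k < f zu cstar := by
  -- LB ≤ margin at zu for cstar
  have hLBle : LB S z y mlb L zu cstar ≤ ((margin hC (f zu) cstar : ℝ) : EReal) := by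
    apply Finset.sup_le
    intro i hi
    rw [Finset.mem_filter] at hi
    obtain ⟨hiS, hiy⟩ := hi
    have hcen := hCenter i hiS
    rw [hiy] at hcen
    have hlip := (abs_le.mp (hLip cstar (z i) zu)).2
    rw [norm_sub_rev] at hlip
    rw [EReal.coe_le_coe_iff]
    linarith
  -- margin at zu for k ≤ UB k for k ≠ cstar
  have hUBge : ∀ k, k ≠ cstar → ((margin hC (f zu) k : ℝ) : EReal) ≤ UB S z y mlb L zu k := by
    intro k hk
    apply Finset.le_inf
    intro i hi
    rw [Finset.mem_filter] at hi
    obtain ⟨hiS, hiy⟩ := hi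
    have hcen := hCenter i hiS
    have hwrong := margin_wrong_le hC (f (z i)) (y i) k (Ne.symm hiy) (mlb i) hcen
    have hlip := (abs_le.mp (hLip k zu (z i))).2
    rw [EReal.coe_le_coe_iff]
    linarith
  intro k hk
  have hkmem : k ∈ Finset.univ.erase cstar := Finset.mem_erase.mpr ⟨hk, Finset.mem_univ k⟩
  have hUBsup : UB S z y mlb L zu k ≤
      (Finset.univ.erase cstar).sup fun c => UB S z y mlb L zu c :=
    Finset.le_sup hkmem
  -- chain in EReal
  have hchain : ((margin hC (f zu) k + τ : ℝ) : EReal) < ((margin hC (f zu) cstar : ℝ) : EReal) := by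
    calc ((margin hC (f zu) k + τ : ℝ) : EReal)
        = ((margin hC (f zu) k : ℝ) : EReal) + (τ : EReal) := by
          rw [← EReal.coe_add]
      _ ≤ ((Finset.univ.erase cstar).sup fun c => UB S z y mlb L zu c) + (τ : EReal) := by
          exact add_le_add_left ((hUBge k hk).trans hUBsup) _
      _ < LB S z y mlb L zu cstar := hGap
      _ ≤ _ := hLBle
  have hmlt : margin hC (f zu) k + τ < margin hC (f zu) cstar := EReal.coe_lt_coe_iff.mp hchain
  have hnn : (0 : ℝ) ≤ margin hC (f zu) cstar := by
    have : (κ : EReal) ≤ ((margin hC (f zu) cstar : ℝ) : EReal) := hLB.trans hLBle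
    have := EReal.coe_le_coe_iff.mp this
    linarith
  -- now the pure logit comparison
  by_contra hcon
  push_neg at hcon
  have h1 : f zu cstar ≤ (Finset.univ.erase cstar).sup' (erase_nonempty' hC cstar) (f zu) :=
    le_trans hcon (Finset.le_sup' (f zu) hkmem)
  have hM0 : margin hC (f zu) cstar ≤ 0 := by
    unfold margin; linarith
  have hAeq : (Finset.univ.erase cstar).sup' (erase_nonempty' hC cstar) (f zu) = f zu cstar := by
    have : margin hC (f zu) cstar = 0 := le_antisymm hM0 hnn
    unfold margin at this; linarith
  have hfk : f zu k = f zu cstar := by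
    have hle : f zu k ≤ (Finset.univ.erase cstar).sup' (erase_nonempty' hC cstar) (f zu) :=
      Finset.le_sup' (f zu) hkmem
    rw [hAeq] at hle
    linarith
  -- sup over erase k equals f zu cstar
  have hcmem : cstar ∈ Finset.univ.erase k := Finset.mem_erase.mpr ⟨Ne.symm hk, Finset.mem_univ cstar⟩
  have hBge : f zu cstar ≤ (Finset.univ.erase k).sup' (erase_nonempty' hC k) (f zu) :=
    Finset.le_sup' (f zu) hcmem
  have hBle : (Finset.univ.erase k).sup' (erase_nonempty' hC k) (f zu) ≤ f zu cstar := by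
    apply Finset.sup'_le
    intro j hj
    rcases eq_or_ne j cstar with rfl | hjc
    · exact le_refl _
    · have hjmem : j ∈ Finset.univ.erase cstar := Finset.mem_erase.mpr ⟨hjc, Finset.mem_univ j⟩
      have := Finset.le_sup' (f zu) hjmem
      rw [hAeq] at this
      exact this
  have hMk : margin hC (f zu) k = 0 := by
    unfold margin
    have : (Finset.univ.erase k).sup' (erase_nonempty' hC k) (f zu) = f zu cstar :=
      le_antisymm hBle hBge
    rw [this, hfk]; ring
  have hMc : margin hC (f zu) cstar = 0 := le_antisymm hM0 hnn
  linarith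
end

section
/- Version-space closure under singleton-forced pseudo-labels: suppose at pool point u every class c' ≠ c has UB_{c'}(u) < 0, and that for every head f̃ ∈ F(S) the argmax of the logits at z_u is nonempty. Then adding u to S with label c and center bound m̲_u := 0 leaves the version space unchanged: F(S ∪ {u}) = F(S). -/
open Finset

/-- The Lipschitz-consistent version space `F(S)`: heads whose margins are
`L_c`-Lipschitz and satisfy the center constraints on the labeled set `S`. -/
def VersionSpace {m C : ℕ} (hC : 2 ≤ C) {ι : Type*} (S : Finset ι)
    (z : ι → EuclideanSpace ℝ (Fin m)) (y : ι → Fin C) (mlb : ι → ℝ)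
    (L : Fin C → ℝ) : Set (EuclideanSpace ℝ (Fin m) → Fin C → ℝ) :=
  {f | (∀ c z₁ z₂, |margin hC (f z₁) c - margin hC (f z₂) c| ≤ L c * ‖z₁ - z₂‖) ∧
       (∀ i ∈ S, mlb i ≤ margin hC (f (z i)) (y i))}

/-- Version-space closure under singleton-forced pseudo-labels: if every class
`c' ≠ c` has strictly negative upper envelope at pool point `u`, and every head
in `F(S)` has a nonempty logit argmax at `z_u`, then adding `u` with label `c`
and center bound `0` leaves the version space unchanged. -/
theorem version_space_closure_singleton_forcing
    {m C : ℕ} (hC : 2 ≤ C) {ι : Type*} [Fintype ι] [DecidableEq ι]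
    (S : Finset ι)
    (z : ι → EuclideanSpace ℝ (Fin m))
    (y : ι → Fin C)
    (mlb : ι → ℝ) (hmlb : ∀ i, 0 ≤ mlb i)
    (L : Fin C → ℝ)
    (u : ι) (hu : u ∉ S)
    (c : Fin C) (hyu : y u = c) (hmu : mlb u = 0)
    (hsingleton : ∀ c' ≠ c,
        ((S.filter fun i => y i ≠ c').inf
          fun i => ((-mlb i + L c' * ‖z u - z i‖ : ℝ) : EReal)) < 0)
    (hargmax : ∀ f ∈ VersionSpace hC S z y mlb L,
        ∃ k : Fin C, ∀ j, f (z u) j ≤ f (z u) k) :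
    VersionSpace hC (insert u S) z y mlb L = VersionSpace hC S z y mlb L := by
  ext f
  constructor
  · rintro ⟨h1, h2⟩
    exact ⟨h1, fun i hi => h2 i (Finset.mem_insert_of_mem hi)⟩
  · rintro ⟨h1, h2⟩
    refine ⟨h1, ?_⟩
    intro i hi
    rcases Finset.mem_insert.1 hi with rfl | hiS
    · rw [hmu, hyu]
      obtain ⟨k, hk⟩ := hargmax f ⟨h1, h2⟩
      have hmk : 0 ≤ margin hC (f (z i)) k := by
        have hle : (Finset.univ.erase k).sup'
            (by
              rw [← Finset.card_pos, Finset.card_erase_of_mem (Finset.mem_univ k),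
                Finset.card_univ, Fintype.card_fin]
              omega) (f (z i)) ≤ f (z i) k :=
          Finset.sup'_le _ _ fun j _ => hk j
        simp only [margin]
        linarith
      by_cases hkc : k = c
      · rwa [hkc] at hmk
      · exfalso
        have hlt := hsingleton k hkc
        rw [Finset.inf_lt_iff] at hlt
        obtain ⟨j, hjmem, hjlt⟩ := hlt
        rw [Finset.mem_filter] at hjmem
        obtain ⟨hjS, hyj⟩ := hjmem
        have hjlt' : -mlb j + L k * ‖z i - z j‖ < 0 := by exact_mod_cast hjlt
        have h2j := h2 j hjS
        have hkmem : k ∈ Finset.univ.erase (y j) :=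
          Finset.mem_erase.2 ⟨fun h => hyj h.symm, Finset.mem_univ k⟩
        have hsup1 : f (z j) k ≤ (Finset.univ.erase (y j)).sup'
            (by
              rw [← Finset.card_pos, Finset.card_erase_of_mem (Finset.mem_univ (y j)),
                Finset.card_univ, Fintype.card_fin]
              omega) (f (z j)) :=
          Finset.le_sup' _ hkmem
        have hymem : y j ∈ Finset.univ.erase k :=
          Finset.mem_erase.2 ⟨hyj, Finset.mem_univ (y j)⟩
        have hsup2 : f (z j) (y j) ≤ (Finset.univ.erase k).sup'
            (by
              rw [← Finset.card_pos, Finset.card_erase_of_mem (Finset.mem_univ k),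
                Finset.card_univ, Fintype.card_fin]
              omega) (f (z j)) :=
          Finset.le_sup' _ hymem
        have hmj : margin hC (f (z j)) k ≤ -mlb j := by
          simp only [margin] at h2j ⊢
          linarith
        have hlip := h1 k (z i) (z j)
        have : margin hC (f (z i)) k ≤ margin hC (f (z j)) k + L k * ‖z i - z j‖ := by
          have := abs_le.1 hlip
          linarith [this.2]
        linarith
    · exact h2 i hiS
end

section
/- Greedy (1 − 1/e) guarantee for coverage: let F(S) := |⋃_{i∈S} B_i| for finite sets B_i ⊆ U (U finite), let S_k be the set built by k steps of greedy selection (at each step adding an element maximizing the marginal gain of F), and let S⋆ be any set of size k. Then F(S_k) ≥ (1 − (1 − 1/k)^k) · F(S⋆) ≥ (1 − 1/e) · F(S⋆). -/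
open Finset

/-- Coverage function: size of the union of the sets `B i` for `i ∈ S`. -/
def cover {ι U : Type*} [DecidableEq U] (B : ι → Finset U) (S : Finset ι) : ℕ :=
  (S.sup B).card

lemma cover_insert {ι U : Type*} [DecidableEq ι] [DecidableEq U]
    (B : ι → Finset U) (T : Finset ι) (y : ι) :
    cover B (insert y T) = cover B T + (B y \ T.sup B).card := by
  unfold cover
  rw [sup_insert, sup_eq_union, ← card_sdiff_add_card]
  omega

lemma cover_le_sum {ι U : Type*} [DecidableEq ι] [DecidableEq U]
    (B : ι → Finset U) (T Sstar : Finset ι) :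
    cover B Sstar ≤ cover B T + ∑ y ∈ Sstar, (B y \ T.sup B).card := by
  have h1 : cover B Sstar ≤ cover B (T ∪ Sstar) :=
    card_le_card (sup_mono subset_union_right)
  have h2 : (T ∪ Sstar).sup B = T.sup B ∪ Sstar.sup B := by
    rw [sup_union, sup_eq_union]
  have h3 : cover B (T ∪ Sstar) = cover B T + (Sstar.sup B \ T.sup B).card := by
    unfold cover
    rw [h2, union_comm, ← card_sdiff_add_card]
    omega
  have hsub : Sstar.sup B \ T.sup B ⊆ Sstar.biUnion (fun y => B y \ T.sup B) := by
    intro a ha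
    simp only [mem_sdiff, mem_sup] at ha
    obtain ⟨⟨y, hy, hay⟩, hna⟩ := ha
    simp only [mem_biUnion, mem_sdiff, mem_sup]
    exact ⟨y, hy, hay, hna⟩
  have h4 : (Sstar.sup B \ T.sup B).card ≤ ∑ y ∈ Sstar, (B y \ T.sup B).card :=
    le_trans (card_le_card hsub) (card_biUnion_le)
  omega

/-- Greedy `(1 - 1/e)` guarantee for set coverage: if `S t` is the chain of sets
built by greedy marginal-gain selection (starting from `∅`, adding at each of
`k` steps an element whose marginal coverage gain is maximal), then the greedy
set after `k` steps covers at least `(1 - (1 - 1/k)^k) ≥ (1 - 1/e)` times the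
coverage of any size-`k` set. -/
theorem greedy_coverage_guarantee
    {ι U : Type*} [Fintype ι] [DecidableEq ι] [Fintype U] [DecidableEq U]
    (B : ι → Finset U)
    (k : ℕ) (hk : 0 < k)
    (S : ℕ → Finset ι)
    (hS0 : S 0 = ∅)
    (hgreedy : ∀ t < k, ∃ x : ι,
        S (t + 1) = insert x (S t) ∧
        ∀ y : ι, cover B (insert y (S t)) ≤ cover B (insert x (S t)))
    (Sstar : Finset ι) (hcard : Sstar.card = k) :
    (1 - (1 - 1 / (k : ℝ)) ^ k) * (cover B Sstar : ℝ) ≤ (cover B (S k) : ℝ) ∧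
    (1 - 1 / Real.exp 1) * (cover B Sstar : ℝ) ≤ (cover B (S k) : ℝ) := by
  set c : ℝ := (cover B Sstar : ℝ) with hc
  have hkR : (0 : ℝ) < (k : ℝ) := by exact_mod_cast hk
  have hq0 : (0 : ℝ) ≤ 1 - 1 / (k : ℝ) := by
    rw [sub_nonneg, div_le_one hkR]
    exact_mod_cast hk
  -- main induction
  have key : ∀ t ≤ k, c - (cover B (S t) : ℝ) ≤ (1 - 1 / (k : ℝ)) ^ t * c := by
    intro t
    induction t with
    | zero =>
      intro _
      have : cover B (S 0) = 0 := by rw [hS0]; rfl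
      simp [this]
    | succ t ih =>
      intro hlt
      have htk : t < k := Nat.lt_of_succ_le hlt
      have ihh := ih (le_of_lt htk)
      obtain ⟨x, hx1, hx2⟩ := hgreedy t htk
      set g : ℝ := ((B x \ (S t).sup B).card : ℝ) with hg
      have hcov1 : (cover B (S (t+1)) : ℝ) = (cover B (S t) : ℝ) + g := by
        rw [hx1, cover_insert]; push_cast; ring
      -- greedy gain dominates average
      have hsum : (cover B Sstar : ℝ) ≤ (cover B (S t) : ℝ) + (k : ℝ) * g := by
        have h5 := cover_le_sum B (S t) Sstar
        have h6 : ∑ y ∈ Sstar, (B y \ (S t).sup B).card ≤ k * (B x \ (S t).sup B).card := by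
          calc ∑ y ∈ Sstar, (B y \ (S t).sup B).card
              ≤ ∑ _y ∈ Sstar, (B x \ (S t).sup B).card := by
                apply sum_le_sum
                intro y _
                have := hx2 y
                rw [cover_insert, cover_insert] at this
                omega
            _ = k * (B x \ (S t).sup B).card := by
                rw [sum_const, hcard, smul_eq_mul]
        have : cover B Sstar ≤ cover B (S t) + k * (B x \ (S t).sup B).card := le_trans h5 (by omega)
        rw [hg]
        exact_mod_cast this
      have hgain : (c - (cover B (S t) : ℝ)) / (k : ℝ) ≤ g := by
        rw [div_le_iff₀ hkR]
        nlinarith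
      have step : c - (cover B (S (t+1)) : ℝ) ≤ (1 - 1 / (k : ℝ)) * (c - (cover B (S t) : ℝ)) := by
        rw [hcov1]
        have h7 : c - ((cover B (S t) : ℝ) + g) ≤ c - (cover B (S t) : ℝ) - (c - (cover B (S t) : ℝ)) / (k : ℝ) := by
          linarith
        calc c - ((cover B (S t) : ℝ) + g)
            ≤ c - (cover B (S t) : ℝ) - (c - (cover B (S t) : ℝ)) / (k : ℝ) := h7
          _ = (1 - 1 / (k : ℝ)) * (c - (cover B (S t) : ℝ)) := by field_simp
      calc c - (cover B (S (t+1)) : ℝ)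
          ≤ (1 - 1 / (k : ℝ)) * (c - (cover B (S t) : ℝ)) := step
        _ ≤ (1 - 1 / (k : ℝ)) * ((1 - 1 / (k : ℝ)) ^ t * c) := by
            apply mul_le_mul_of_nonneg_left ihh hq0
        _ = (1 - 1 / (k : ℝ)) ^ (t + 1) * c := by ring
  have main := key k le_rfl
  have first : (1 - (1 - 1 / (k : ℝ)) ^ k) * c ≤ (cover B (S k) : ℝ) := by nlinarith
  refine ⟨first, ?_⟩
  -- (1 - 1/k)^k ≤ 1/e
  have hexp : (1 - 1 / (k : ℝ)) ^ k ≤ 1 / Real.exp 1 := by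
    have h1 : 1 - 1 / (k : ℝ) ≤ Real.exp (-(1 / (k : ℝ))) := by
      have := Real.add_one_le_exp (-(1 / (k : ℝ)))
      linarith
    have h2 : (1 - 1 / (k : ℝ)) ^ k ≤ (Real.exp (-(1 / (k : ℝ)))) ^ k :=
      pow_le_pow_left₀ hq0 h1 k
    have h3 : (Real.exp (-(1 / (k : ℝ)))) ^ k = Real.exp ((k : ℝ) * (-(1 / (k : ℝ)))) := by
      rw [← Real.exp_nat_mul]
    have h4 : (k : ℝ) * (-(1 / (k : ℝ))) = -1 := by field_simp
    rw [h3, h4] at h2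
    rw [Real.exp_neg] at h2
    simpa [one_div] using h2
  have hc0 : (0 : ℝ) ≤ c := by positivity
  nlinarith
end
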